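/- Let p be a prime, n ≥ 2, and a a p-ary nearly perfect sequence of period n and type γ ≠ 0 with |γ| < n. Let q ≠ p be a prime with q^r exactly dividing (γ+1)n - γ, and suppose q is self-conjugate modulo up for some divisor u ≥ 1 of n with q ∤ u. Then r is even. -/

import Mathlib

open Polynomial AdjoinRoot

private lemma aux_int_dvd {p : ℕ} (hp : p.Prime) {q : ℤ} {e : ℕ} {z : ℤ}
    (h : (q : AdjoinRoot (cyclotomic p ℤ)) ^ e ∣ (z : AdjoinRoot (cyclotomic p ℤ))) :
    q ^ e ∣ z := by
  set f := cyclotomic p ℤ with hf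
  obtain ⟨w, hw⟩ := h
  have hmonic : f.Monic := cyclotomic.monic p ℤ
  let pb := AdjoinRoot.powerBasis' hmonic
  have hdim : 0 < pb.dim := by
    have h1 : pb.dim = p - 1 := by
      simp [pb, hf, natDegree_cyclotomic, Nat.totient_prime hp]
    have := hp.two_le
    omega
  have h1 : (1 : AdjoinRoot f) = pb.basis ⟨0, hdim⟩ := by
    rw [pb.basis_eq_pow]; simp
  have e1 : pb.basis.repr ((z : AdjoinRoot f)) ⟨0, hdim⟩ = z := by
    have hz : (z : AdjoinRoot f) = z • pb.basis ⟨0, hdim⟩ := by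
      rw [← h1, zsmul_eq_mul, mul_one]
    rw [hz, map_smul]
    simp [Module.Basis.repr_self]
    rw [h1, Module.Basis.repr_self]
    simp
  have e2 : pb.basis.repr ((z : AdjoinRoot f)) ⟨0, hdim⟩
      = q ^ e * pb.basis.repr w ⟨0, hdim⟩ := by
    have hz : (z : AdjoinRoot f) = (q ^ e) • w := by
      rw [hw, zsmul_eq_mul]; push_cast; ring
    rw [hz, map_smul]
    simp
  exact ⟨_, by rw [← e1, e2]⟩

private lemma aux_charzero {p : ℕ} (hp : p.Prime) {z : ℤ}
    (h : (z : AdjoinRoot (cyclotomic p ℤ)) = 0) : z = 0 := by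
  have h2 : ((0:ℤ) : AdjoinRoot (cyclotomic p ℤ)) ^ 1 ∣ (z : AdjoinRoot (cyclotomic p ℤ)) := by
    simp [h]
  have := aux_int_dvd hp h2
  simpa using this



private lemma aux_mkC {p q : ℕ} :
    (AdjoinRoot.mk (cyclotomic p ℤ)) (C ((q:ℕ):ℤ)) = (q : AdjoinRoot (cyclotomic p ℤ)) := by
  rw [Polynomial.C_eq_natCast, map_natCast]

private lemma aux_red {p q : ℕ} (hp : p.Prime) (hq : q.Prime) (hqp : q ≠ p)
    {x : AdjoinRoot (cyclotomic p ℤ)} {N : ℕ} (hN : N ≠ 0)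
    (h : (q : AdjoinRoot (cyclotomic p ℤ)) ∣ x ^ N) :
    (q : AdjoinRoot (cyclotomic p ℤ)) ∣ x := by
  haveI := Fact.mk hq
  obtain ⟨g, rfl⟩ := AdjoinRoot.mk_surjective x
  obtain ⟨w, hw⟩ := h
  obtain ⟨h₁, rfl⟩ := AdjoinRoot.mk_surjective w
  have hker : cyclotomic p ℤ ∣ g ^ N - C ((q:ℕ):ℤ) * h₁ := by
    rw [← AdjoinRoot.mk_eq_zero, map_sub, map_mul, map_pow, aux_mkC, ← hw, sub_self]
  obtain ⟨c, hc⟩ := hker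
  have hsurj : Function.Surjective ⇑(Int.castRingHom (ZMod q)) := ZMod.intCast_surjective
  have hq0 : ((Int.castRingHom (ZMod q)) ((q:ℕ):ℤ)) = 0 := by
    simp [ZMod.intCast_zmod_eq_zero_iff_dvd]
  have h2 : (g.map (Int.castRingHom (ZMod q))) ^ N
      = cyclotomic p (ZMod q) * c.map (Int.castRingHom (ZMod q)) := by
    have hthis := congrArg (Polynomial.map (Int.castRingHom (ZMod q))) hc
    simp only [Polynomial.map_sub, Polynomial.map_mul, Polynomial.map_pow,
      Polynomial.map_C, hq0, Polynomial.C_0, zero_mul, sub_zero, map_cyclotomic] at hthis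
    exact hthis
  have hp0 : ((p : ZMod q)) ≠ 0 := by
    rw [Ne, ZMod.natCast_eq_zero_iff]
    intro hdvd
    exact hqp ((Nat.prime_dvd_prime_iff_eq hq hp).mp hdvd)
  have hsep : (X ^ p - 1 : (ZMod q)[X]).Separable := by
    have := separable_X_pow_sub_C (1 : ZMod q) hp0 one_ne_zero
    simpa using this
  have hsqf : Squarefree (cyclotomic p (ZMod q)) :=
    Squarefree.squarefree_of_dvd (cyclotomic.dvd_X_pow_sub_one p (ZMod q)) hsep.squarefree
  have hdvd : cyclotomic p (ZMod q) ∣ g.map (Int.castRingHom (ZMod q)) :=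
    (hsqf.dvd_pow_iff_dvd hN).mp ⟨_, h2⟩
  obtain ⟨c₂, hc₂⟩ := hdvd
  obtain ⟨h₂, rfl⟩ := Polynomial.map_surjective _ hsurj c₂
  have hcoeff : ∀ i, ((q:ℕ) : ℤ) ∣ (g - cyclotomic p ℤ * h₂).coeff i := by
    intro i
    have h0 : (g - cyclotomic p ℤ * h₂).map (Int.castRingHom (ZMod q)) = 0 := by
      rw [Polynomial.map_sub, Polynomial.map_mul, map_cyclotomic, ← hc₂]
      ring
    have h1 : (Int.castRingHom (ZMod q)) ((g - cyclotomic p ℤ * h₂).coeff i) = 0 := by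
      rw [← Polynomial.coeff_map, h0, Polynomial.coeff_zero]
    exact (ZMod.intCast_zmod_eq_zero_iff_dvd _ q).mp h1
  obtain ⟨h₃, hh₃⟩ := (Polynomial.C_dvd_iff_dvd_coeff _ _).mpr hcoeff
  have hg : g = cyclotomic p ℤ * h₂ + C ((q:ℕ):ℤ) * h₃ := by rw [← hh₃]; ring
  rw [hg, map_add, map_mul, map_mul, aux_mkC, AdjoinRoot.mk_self, zero_mul, zero_add]
  exact Dvd.intro _ rfl




private lemma aux_domain {p : ℕ} (hp : p.Prime) : IsDomain (AdjoinRoot (cyclotomic p ℤ)) :=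
  AdjoinRoot.isDomain_of_prime
    (UniqueFactorizationMonoid.irreducible_iff_prime.mp (cyclotomic.irreducible hp.pos))

private lemma aux_rootpow {p : ℕ} (hp : p.Prime) :
    (AdjoinRoot.root (cyclotomic p ℤ)) ^ p = 1 := by
  have h : AdjoinRoot.mk (cyclotomic p ℤ) (X ^ p - 1) = 0 :=
    AdjoinRoot.mk_eq_zero.2 (cyclotomic.dvd_X_pow_sub_one p ℤ)
  rw [map_sub, map_pow, AdjoinRoot.mk_X, map_one, sub_eq_zero] at h
  exact h

private lemma aux_conj_root {p : ℕ} (hp : p.Prime) :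
    (Polynomial.aeval ((AdjoinRoot.root (cyclotomic p ℤ)) ^ (p - 1))) (cyclotomic p ℤ) = 0 := by
  haveI := Fact.mk hp
  haveI := aux_domain hp
  set y := (AdjoinRoot.root (cyclotomic p ℤ)) ^ (p - 1) with hy
  have hyp : y ^ p = 1 := by
    rw [hy, ← pow_mul, mul_comm, pow_mul, aux_rootpow hp, one_pow]
  clear_value y
  have haev : (Polynomial.aeval y) (cyclotomic p ℤ) = ∑ i ∈ Finset.range p, y ^ i := by
    have h1 : (Polynomial.aeval y) (cyclotomic p ℤ)
        = (Polynomial.aeval y) (∑ i ∈ Finset.range p, (X : ℤ[X]) ^ i) :=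
      congrArg _ (cyclotomic_prime ℤ p)
    rw [h1, map_sum]
    simp only [map_pow, Polynomial.aeval_X]
  have hgeom : (Polynomial.aeval y) (cyclotomic p ℤ) * (y - 1) = y ^ p - 1 := by
    rw [haev]
    exact geom_sum_mul y p
  rw [hyp, sub_self] at hgeom
  rcases mul_eq_zero.mp hgeom with h | h
  · exact h
  · exfalso
    have hy1 : y = 1 := by rwa [sub_eq_zero] at h
    have hroot1 : (AdjoinRoot.root (cyclotomic p ℤ)) = 1 := by
      have : (AdjoinRoot.root (cyclotomic p ℤ)) ^ (p - 1 + 1) = AdjoinRoot.root (cyclotomic p ℤ) := by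
        rw [pow_succ, ← hy, hy1, one_mul]
      rw [Nat.sub_add_cancel hp.one_le, aux_rootpow hp] at this
      exact this.symm
    have h0 : (Polynomial.aeval (AdjoinRoot.root (cyclotomic p ℤ))) (cyclotomic p ℤ) = 0 := by
      rw [AdjoinRoot.aeval_eq, AdjoinRoot.mk_self]
    rw [hroot1] at h0
    have h1 : ((p : ℤ) : AdjoinRoot (cyclotomic p ℤ)) = 0 := by
      have h2 := Polynomial.aeval_algebraMap_apply_eq_algebraMap_eval
        (A := AdjoinRoot (cyclotomic p ℤ)) (1 : ℤ) (cyclotomic p ℤ)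
      rw [map_one, h0, Polynomial.eval_one_cyclotomic_prime] at h2
      simpa [algebraMap_int_eq] using h2.symm
    have := aux_charzero hp h1
    exact hp.ne_zero (by exact_mod_cast this)






private lemma aux_frob {p q j : ℕ} (hp : p.Prime) (hq : q.Prime) (hj : q ^ j % p = p - 1)
    (x : AdjoinRoot (cyclotomic p ℤ)) :
    (q : AdjoinRoot (cyclotomic p ℤ)) ∣
      (AdjoinRoot.liftAlgHom (cyclotomic p ℤ) (Algebra.ofId ℤ _) ((AdjoinRoot.root (cyclotomic p ℤ)) ^ (p - 1))
        (by rw [Algebra.toRingHom_ofId, ← Polynomial.aeval_def]; exact aux_conj_root hp)) x - x ^ (q ^ j) := by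
  haveI := Fact.mk hq
  set c := AdjoinRoot.liftAlgHom (cyclotomic p ℤ) (Algebra.ofId ℤ _) ((AdjoinRoot.root (cyclotomic p ℤ)) ^ (p - 1))
    (by rw [Algebra.toRingHom_ofId, ← Polynomial.aeval_def]; exact aux_conj_root hp) with hc
  set I : Ideal (AdjoinRoot (cyclotomic p ℤ)) := Ideal.span {(q : AdjoinRoot (cyclotomic p ℤ))} with hI
  have hmem : ∀ y : AdjoinRoot (cyclotomic p ℤ), Ideal.Quotient.mk I y = 0 ↔ (q : AdjoinRoot (cyclotomic p ℤ)) ∣ y := by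
    intro y
    rw [Ideal.Quotient.eq_zero_iff_mem, hI, Ideal.mem_span_singleton]
  haveI : CharP ((AdjoinRoot (cyclotomic p ℤ)) ⧸ I) q := by
    constructor
    intro m
    have h1 : ((m : ℕ) : (AdjoinRoot (cyclotomic p ℤ)) ⧸ I) = Ideal.Quotient.mk I ((m : ℕ) : AdjoinRoot (cyclotomic p ℤ)) := (map_natCast _ m).symm
    rw [h1, hmem]
    constructor
    · intro hdvd
      have h2 : ((q:ℤ) : AdjoinRoot (cyclotomic p ℤ)) ^ 1 ∣ (((m:ℕ):ℤ) : AdjoinRoot (cyclotomic p ℤ)) := by push_cast; simpa using hdvd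
      have := aux_int_dvd hp h2
      rw [pow_one] at this
      exact_mod_cast this
    · intro hdvd
      exact_mod_cast (Nat.cast_dvd_cast (α := AdjoinRoot (cyclotomic p ℤ)) hdvd)
  have hroots : (AdjoinRoot.root (cyclotomic p ℤ)) ^ (q ^ j)
      = (AdjoinRoot.root (cyclotomic p ℤ)) ^ (p - 1) := by
    conv_lhs => rw [← Nat.div_add_mod (q ^ j) p]
    rw [pow_add, pow_mul, aux_rootpow hp, one_pow, one_mul, hj]
  have hext : ((Ideal.Quotient.mk I).comp (c : AdjoinRoot (cyclotomic p ℤ) →ₐ[ℤ] AdjoinRoot (cyclotomic p ℤ)).toRingHom).toIntAlgHom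
      = ((iterateFrobenius ((AdjoinRoot (cyclotomic p ℤ)) ⧸ I) q j).comp (Ideal.Quotient.mk I)).toIntAlgHom := by
    apply AdjoinRoot.algHom_ext
    show Ideal.Quotient.mk I (c (AdjoinRoot.root (cyclotomic p ℤ)))
      = iterateFrobenius ((AdjoinRoot (cyclotomic p ℤ)) ⧸ I) q j (Ideal.Quotient.mk I (AdjoinRoot.root (cyclotomic p ℤ)))
    rw [hc, AdjoinRoot.liftAlgHom_root, iterateFrobenius_def, ← map_pow, hroots]
  have happ : Ideal.Quotient.mk I (c x) = Ideal.Quotient.mk I (x ^ (q ^ j)) := by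
    have := congrArg (fun (g : AdjoinRoot (cyclotomic p ℤ) →ₐ[ℤ] (AdjoinRoot (cyclotomic p ℤ)) ⧸ I) => g x) hext
    rw [map_pow]; exact this
  rw [← hmem]
  rw [map_sub, happ, sub_self]


theorem stmt_19 (p : ℕ) (hp : p.Prime) (n : ℕ) (hn : 2 ≤ n) [NeZero n]
    (γ : ℤ) (hγ0 : γ ≠ 0) (hγn : |γ| < (n : ℤ))
    (ζ : ℂ) (hζ : IsPrimitiveRoot ζ p)
    (b : ZMod n → ℕ) (a : ZMod n → ℂ) (ha : ∀ i, a i = ζ ^ b i)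
    (hnps : ∀ t : ZMod n, t ≠ 0 →
      ∑ i : ZMod n, a i * (starRingEnd ℂ) (a (i + t)) = γ)
    (q r : ℕ) (hq : q.Prime) (hqp : q ≠ p)
    (hqr : (q : ℤ) ^ r ∣ (γ + 1) * (n : ℤ) - γ)
    (hqr1 : ¬ (q : ℤ) ^ (r + 1) ∣ (γ + 1) * (n : ℤ) - γ)
    (u : ℕ) (hu : u ∣ n) (hu1 : 1 ≤ u) (hqu : ¬ q ∣ u)
    (j : ℕ)
    (hsc : (q : ZMod ((u * p) / q ^ ((u * p).factorization q))) ^ j = -1) :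
    Even r := by
  classical
  haveI hfp := Fact.mk hp
  haveI hfq := Fact.mk hq
  set m : ℤ := (γ + 1) * n - γ with hm
  -- self-conjugacy gives q ^ j ≡ -1 mod p
  have hfac : (u * p).factorization q = 0 := Nat.factorization_eq_zero_of_not_dvd (by
    intro hdvd
    rcases (Nat.Prime.dvd_mul hq).1 hdvd with h | h
    · exact hqu h
    · exact hqp ((Nat.prime_dvd_prime_iff_eq hq hp).1 h))
  rw [hfac, pow_zero, Nat.div_one] at hsc
  have hpdvd : p ∣ u * p := ⟨u, mul_comm u p⟩
  have hsc2 : ((q : ZMod p)) ^ j = -1 := by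
    have h1 := congrArg (ZMod.castHom hpdvd (ZMod p)) hsc
    rw [map_pow, map_natCast, map_neg, map_one] at h1
    exact h1
  have hj : q ^ j % p = p - 1 := by
    have h1 : ((q ^ j : ℕ) : ZMod p) = ((p - 1 : ℕ) : ZMod p) := by
      have h2 : ((p - 1 : ℕ) : ZMod p) = -1 := by
        rw [Nat.cast_sub hp.one_le]
        simp
      rw [h2]
      push_cast
      exact hsc2
    have h3 := (ZMod.natCast_eq_natCast_iff' _ _ _).1 h1
    have hp1 : (p - 1) % p = p - 1 := Nat.mod_eq_of_lt (by have := hp.two_le; omega)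
    rwa [hp1] at h3
  -- ζ facts
  have hζp : ζ ^ p = 1 := hζ.pow_eq_one
  have hζ0 : ζ ≠ 0 := by
    intro h
    rw [h, zero_pow hp.ne_zero] at hζp
    exact zero_ne_one hζp
  have hζnorm : ζ * (starRingEnd ℂ) ζ = 1 := by
    rw [Complex.mul_conj]
    have h1 : ‖ζ‖ = 1 := Complex.norm_eq_one_of_pow_eq_one hζp hp.ne_zero
    rw [Complex.normSq_eq_norm_sq, h1]
    norm_num
  have hζconj : (starRingEnd ℂ) ζ = ζ ^ (p - 1) := by
    have h1 : ζ * ζ ^ (p - 1) = 1 := by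
      rw [← pow_succ']
      rw [Nat.sub_add_cancel hp.one_le]
      exact hζp
    exact (mul_left_cancel₀ hζ0 (hζnorm.trans h1.symm))
  set S : ℂ := ∑ i : ZMod n, a i with hS
  have haiconj : ∀ i : ZMod n, a i * (starRingEnd ℂ) (a i) = 1 := by
    intro i
    rw [ha i, map_pow, mul_comm, ← mul_pow, mul_comm ((starRingEnd ℂ) ζ) ζ, hζnorm, one_pow]
  have hmain : (m : ℂ) = S * (starRingEnd ℂ) S := by
    have h1 : S * (starRingEnd ℂ) S = ∑ i : ZMod n, ∑ t : ZMod n, a i * (starRingEnd ℂ) (a (i + t)) := by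
      rw [hS, map_sum, Finset.sum_mul_sum]
      refine Finset.sum_congr rfl fun i _ => ?_
      exact (Fintype.sum_equiv (Equiv.addLeft i) _ _ (fun t => rfl)).symm
    rw [h1, Finset.sum_comm]
    rw [← Finset.sum_erase_add _ _ (Finset.mem_univ (0 : ZMod n))]
    have h2 : ∑ i : ZMod n, a i * (starRingEnd ℂ) (a (i + 0)) = (n : ℂ) := by
      simp only [add_zero, haiconj]
      rw [Finset.sum_const, Finset.card_univ, ZMod.card]
      simp
    have h3 : ∑ t ∈ Finset.univ.erase (0 : ZMod n), ∑ i : ZMod n, a i * (starRingEnd ℂ) (a (i + t))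
        = ((n - 1 : ℕ) : ℂ) * (γ : ℂ) := by
      rw [Finset.sum_congr rfl (fun t ht => hnps t (Finset.ne_of_mem_erase ht))]
      rw [Finset.sum_const, Finset.card_erase_of_mem (Finset.mem_univ _), Finset.card_univ, ZMod.card]
      simp [mul_comm]
    rw [h2, h3, hm]
    push_cast [Nat.cast_sub (by omega : 1 ≤ n)]
    ring
  have hm0 : m ≠ 0 := by
    intro h
    exact hqr1 (h ▸ dvd_zero _)
  haveI := aux_domain hp
  haveI : NeZero ((p : ℂ)) := ⟨Nat.cast_ne_zero.2 hp.ne_zero⟩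
  have hζf : Polynomial.aeval ζ (Polynomial.cyclotomic p ℤ) = 0 := by
    rw [Polynomial.aeval_def, ← Polynomial.eval_map, Polynomial.map_cyclotomic]
    exact Polynomial.isRoot_cyclotomic_iff.mpr hζ
  set φ := AdjoinRoot.liftAlgHom (Polynomial.cyclotomic p ℤ) (Algebra.ofId ℤ _) ζ (by rw [Algebra.toRingHom_ofId, ← Polynomial.aeval_def]; exact hζf) with hφdef
  have hφroot : φ (AdjoinRoot.root (Polynomial.cyclotomic p ℤ)) = ζ := by
    rw [hφdef, AdjoinRoot.liftAlgHom_root]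
  have hinj : Function.Injective φ := by
    rw [injective_iff_map_eq_zero]
    intro x hx
    obtain ⟨g, rfl⟩ := AdjoinRoot.mk_surjective x
    rw [hφdef, AdjoinRoot.liftAlgHom_mk, Algebra.toRingHom_ofId, ← Polynomial.aeval_def] at hx
    have hint : IsIntegral ℤ ζ := hζ.isIntegral hp.pos
    have hdvd : minpoly ℤ ζ ∣ g := minpoly.isIntegrallyClosed_dvd hint hx
    rw [← Polynomial.cyclotomic_eq_minpoly hζ hp.pos] at hdvd
    exact AdjoinRoot.mk_eq_zero.2 hdvd
  set c := AdjoinRoot.liftAlgHom (Polynomial.cyclotomic p ℤ) (Algebra.ofId ℤ _)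
      ((AdjoinRoot.root (Polynomial.cyclotomic p ℤ)) ^ (p - 1)) (by rw [Algebra.toRingHom_ofId, ← Polynomial.aeval_def]; exact aux_conj_root hp) with hcdef
  have hφc : ∀ x, φ (c x) = (starRingEnd ℂ) (φ x) := by
    have hext : φ.comp c = ((starRingEnd ℂ).comp φ.toRingHom).toIntAlgHom := by
      apply AdjoinRoot.algHom_ext
      show φ (c (AdjoinRoot.root _)) = (starRingEnd ℂ) (φ (AdjoinRoot.root _))
      rw [hcdef, AdjoinRoot.liftAlgHom_root, map_pow, hφroot, ← hζconj]
    intro x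
    have h1 := congrArg (fun (g : _ →ₐ[ℤ] ℂ) => g x) hext
    exact h1
  set s : AdjoinRoot (Polynomial.cyclotomic p ℤ) :=
    ∑ i : ZMod n, (AdjoinRoot.root (Polynomial.cyclotomic p ℤ)) ^ (b i) with hsdef
  have hφs : φ s = S := by
    rw [hsdef, map_sum, hS]
    refine Finset.sum_congr rfl fun i _ => ?_
    rw [map_pow, hφroot, ha i]
  have hts : s * c s = ((m : ℤ) : AdjoinRoot (Polynomial.cyclotomic p ℤ)) := by
    apply hinj
    rw [map_mul, hφs, hφc, hφs, map_intCast]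
    exact hmain.symm
  have hqA0 : ((q : ℕ) : AdjoinRoot (Polynomial.cyclotomic p ℤ)) ≠ 0 := by
    intro h
    have h2 : (((q:ℕ):ℤ) : AdjoinRoot (Polynomial.cyclotomic p ℤ)) = 0 := by push_cast; exact_mod_cast h
    have := aux_charzero hp h2
    exact hq.ne_zero (by exact_mod_cast this)
  -- bound on powers of q dividing s
  have hbound : ∀ k : ℕ, ((q:ℕ) : AdjoinRoot (Polynomial.cyclotomic p ℤ)) ^ k ∣ s →
      (q : ℤ) ^ (2 * k) ∣ m := by
    intro k hk
    obtain ⟨w, hw⟩ := hk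
    have h1 : ((m : ℤ) : AdjoinRoot (Polynomial.cyclotomic p ℤ))
        = ((q:ℕ) : AdjoinRoot (Polynomial.cyclotomic p ℤ)) ^ (2 * k) * (w * c w) := by
      rw [← hts, hw, map_mul, map_pow, map_natCast]
      ring
    have h2 : (((q:ℤ)) : AdjoinRoot (Polynomial.cyclotomic p ℤ)) ^ (2 * k)
        ∣ ((m : ℤ) : AdjoinRoot (Polynomial.cyclotomic p ℤ)) := by
      refine ⟨w * c w, ?_⟩
      rw [h1]
      norm_cast
    exact aux_int_dvd hp h2
  set P : ℕ → Prop := fun k => ((q:ℕ) : AdjoinRoot (Polynomial.cyclotomic p ℤ)) ^ k ∣ s with hP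
  set K : ℕ := m.natAbs + 1 with hK
  have hPK : ¬ P K := by
    intro hPK
    have h1 := hbound K hPK
    have h2 : (q : ℤ) ^ (2 * K) ≤ |m| := Int.le_of_dvd (abs_pos.mpr hm0) ((dvd_abs _ _).2 h1)
    have h3 : (2 : ℤ) ^ (2 * K) ≤ (q : ℤ) ^ (2 * K) :=
      pow_le_pow_left₀ (by norm_num) (by exact_mod_cast hq.two_le) _
    have h4 : (m.natAbs : ℤ) < 2 ^ m.natAbs := by exact_mod_cast m.natAbs.lt_two_pow_self
    have h5 : (2 : ℤ) ^ m.natAbs ≤ 2 ^ (2 * K) := pow_le_pow_right₀ (by norm_num) (by omega)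
    rw [Int.abs_eq_natAbs] at h2
    omega
  have hP0 : P 0 := by rw [hP]; simp
  set k : ℕ := Nat.findGreatest P K with hkdef
  have hPk : P k := Nat.findGreatest_spec (Nat.zero_le K) hP0
  have hkK : k < K := by
    rcases Nat.lt_or_ge k K with h | h
    · exact h
    · exfalso
      have : k = K := le_antisymm (Nat.findGreatest_le K) h
      exact hPK (this ▸ hPk)
  have hPk1 : ¬ P (k + 1) := Nat.findGreatest_is_greatest (Nat.lt_succ_self k) (by omega)
  obtain ⟨s', hs'⟩ := hPk
  have hqs' : ¬ ((q:ℕ) : AdjoinRoot (Polynomial.cyclotomic p ℤ)) ∣ s' := by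
    rintro ⟨w, hw⟩
    exact hPk1 ⟨w, by rw [hs', hw]; ring⟩
  obtain ⟨m', hm'⟩ : (q : ℤ) ^ (2 * k) ∣ m := hbound k ⟨s', hs'⟩
  have hiA : ((m' : ℤ) : AdjoinRoot (Polynomial.cyclotomic p ℤ)) = s' * c s' := by
    have h1 : ((m : ℤ) : AdjoinRoot (Polynomial.cyclotomic p ℤ))
        = ((q:ℕ) : AdjoinRoot (Polynomial.cyclotomic p ℤ)) ^ (2 * k) * (s' * c s') := by
      rw [← hts, hs', map_mul, map_pow, map_natCast]
      ring
    have h2 : ((m : ℤ) : AdjoinRoot (Polynomial.cyclotomic p ℤ))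
        = ((q:ℕ) : AdjoinRoot (Polynomial.cyclotomic p ℤ)) ^ (2 * k)
          * ((m' : ℤ) : AdjoinRoot (Polynomial.cyclotomic p ℤ)) := by
      rw [hm']
      push_cast
      ring
    exact (mul_left_cancel₀ (pow_ne_zero _ hqA0) (h2.symm.trans h1))
  have hqm' : ¬ (q : ℤ) ∣ m' := by
    intro hdvd
    obtain ⟨w, hw⟩ := hdvd
    have h1 : ((q:ℕ) : AdjoinRoot (Polynomial.cyclotomic p ℤ)) ∣ s' * c s' := by
      rw [← hiA, hw]
      push_cast
      exact Dvd.intro _ rfl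
    have h2 : ((q:ℕ) : AdjoinRoot (Polynomial.cyclotomic p ℤ)) ∣ s' ^ (q ^ j + 1) := by
      have hfr := aux_frob hp hq hj s'
      rw [← hcdef] at hfr
      have h3 : s' ^ (q ^ j + 1) = s' * c s' - s' * (c s' - s' ^ (q ^ j)) := by ring
      rw [h3]
      exact dvd_sub h1 (hfr.mul_left s')
    exact hqs' (aux_red hp hq hqp (Nat.succ_ne_zero _) h2)
  have hrk : r = 2 * k := by
    by_contra hne
    rcases Nat.lt_or_ge r (2 * k) with hlt | hge
    · exact hqr1 (dvd_trans (pow_dvd_pow _ (by omega)) ⟨m', hm'⟩)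
    · have h1 : 2 * k + 1 ≤ r := by omega
      have h2 : (q : ℤ) ^ (2 * k + 1) ∣ m := dvd_trans (pow_dvd_pow _ h1) hqr
      obtain ⟨w, hw2⟩ := h2
      apply hqm'
      refine ⟨w, ?_⟩
      have hq0 : ((q:ℤ)) ^ (2 * k) ≠ 0 := pow_ne_zero _ (by exact_mod_cast hq.ne_zero)
      have h3 : (q:ℤ) ^ (2 * k) * m' = (q:ℤ) ^ (2 * k) * ((q:ℤ) * w) := by
        rw [← hm', hw2]
        ring
      exact mul_left_cancel₀ hq0 h3
  exact ⟨k, by omega⟩
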